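/- Let Q be a generic matrix whose determinant factors into N nonconstant irreducible factors, corresponding to sections g₁,…,g_N of the bipartite structure. Then among these sections there exists at least one 'edge section': a section g_i such that all edges between g_i and other sections attach to g_i from only one of the two vertex classes (only black sites of g_i connect externally, or only white sites of g_i connect externally). -/

import Mathlib

open Matrix MvPolynomial

lemma L2 {α V F : Type*} [Fintype α] [DecidableEq α] [Nonempty α] [Field F]
    (M : Matrix α α (MvPolynomial V F))
    (hM : ∀ a b, M a b = 0 ∨ ∃ v, M a b = MvPolynomial.X v) :
    ¬ IsUnit M.det := by
  intro hu
  have h1 : (MvPolynomial.eval (0 : V → F)) M.det = (M.map (MvPolynomial.eval 0)).det :=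
    RingHom.map_det _ M
  have h2 : M.map (MvPolynomial.eval (0 : V → F)) = 0 := by
    ext a b
    rcases hM a b with h | ⟨v, h⟩ <;> simp [Matrix.map_apply, h]
  have h3 : (MvPolynomial.eval (0 : V → F)) M.det = 0 := by
    rw [h1, h2, Matrix.det_zero]
  have := hu.map (MvPolynomial.eval (0 : V → F))
  rw [h3] at this
  exact not_isUnit_zero this

lemma L1 {α V F : Type*} [Fintype α] [DecidableEq α] [Field F]
    (P : α → α → Prop) [∀ a b, Decidable (P a b)] (g : α → α → V)
    (hdet : (Matrix.of fun a b =>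
      if P a b then (MvPolynomial.X (g a b) : MvPolynomial V F) else 0).det ≠ 0) :
    ∃ π : Equiv.Perm α, ∀ a, P a (π a) := by
  by_contra hc
  push_neg at hc
  apply hdet
  rw [Matrix.det_apply]
  refine Finset.sum_eq_zero fun σ _ => ?_
  obtain ⟨a, ha⟩ := hc σ.symm
  have : (Matrix.of fun a b =>
      if P a b then (MvPolynomial.X (g a b) : MvPolynomial V F) else 0) (σ (σ.symm a)) (σ.symm a) = 0 := by
    simp only [Matrix.of_apply, Equiv.apply_symm_apply, if_neg ha]
  rw [Finset.prod_eq_zero (f := fun i => (Matrix.of fun a b =>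
      if P a b then (MvPolynomial.X (g a b) : MvPolynomial V F) else 0) (σ i) i)
    (Finset.mem_univ (σ.symm a)) this, smul_zero]

lemma L3 {α V F : Type*} [Fintype α] [DecidableEq α] [Field F]
    (P : α → α → Prop) [∀ a b, Decidable (P a b)] (g : α → α → V)
    (A B : Finset α) (hcard : B.card = A.card) (hA : A.Nonempty) (hAu : A ≠ Finset.univ)
    (hPB : ∀ a ∈ A, ∀ b, P a b → b ∈ B) :
    ¬ Irreducible ((Matrix.of fun a b =>
      if P a b then (MvPolynomial.X (g a b) : MvPolynomial V F) else 0).det) := by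
  intro hirr
  set M : Matrix α α (MvPolynomial V F) :=
    Matrix.of fun a b => if P a b then (MvPolynomial.X (g a b) : MvPolynomial V F) else 0 with hMdef
  have e1 : {x // x ∈ A} ≃ {x // x ∈ B} :=
    Fintype.equivOfCardEq (by simp [Fintype.card_coe, hcard])
  have e2 : {x // ¬ x ∈ A} ≃ {x // ¬ x ∈ B} :=
    Fintype.equivOfCardEq (by
      rw [Fintype.card_subtype_compl, Fintype.card_subtype_compl]
      simp [Fintype.card_coe, hcard])
  set r : ({x // x ∈ A} ⊕ {x // ¬ x ∈ A}) ≃ α := Equiv.sumCompl (· ∈ A) with hr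
  set k : ({x // x ∈ A} ⊕ {x // ¬ x ∈ A}) ≃ α :=
    (Equiv.sumCongr e1 e2).trans (Equiv.sumCompl (· ∈ B)) with hk
  set σ : Equiv.Perm ({x // x ∈ A} ⊕ {x // ¬ x ∈ A}) := k.trans r.symm with hσ
  set M' := M.submatrix r k with hM'
  have hsub : M' = (M.submatrix r r).submatrix id σ := by
    ext x y
    simp [hM', hσ, Matrix.submatrix_apply]
  have hdet' : M'.det = Equiv.Perm.sign σ * M.det := by
    rw [hsub, Matrix.det_permute', Matrix.det_submatrix_equiv_self]
  -- top-right block is zero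
  have hblock : M'.toBlocks₁₂ = 0 := by
    ext a b
    have hb : ¬ ((k (Sum.inr b) : α) ∈ B) := by
      simp only [hk, Equiv.trans_apply, Equiv.sumCongr_apply, Sum.map_inr]
      exact (e2 b).2
    have : ¬ P (a : α) (k (Sum.inr b)) := fun hp => hb (hPB a a.2 _ hp)
    simp [Matrix.toBlocks₁₂, hM', Matrix.submatrix_apply, hMdef, this, hr]
  have hfactor : M'.det = M'.toBlocks₁₁.det * M'.toBlocks₂₂.det := by
    conv_lhs => rw [← Matrix.fromBlocks_toBlocks M', hblock]
    exact Matrix.det_fromBlocks_zero₁₂ _ _ _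
  have hne1 : Nonempty {x // x ∈ A} := ⟨⟨hA.choose, hA.choose_spec⟩⟩
  have hne2 : Nonempty {x // ¬ x ∈ A} := by
    obtain ⟨x, hx⟩ : ∃ x, x ∉ A := by
      by_contra h
      push_neg at h
      exact hAu (Finset.eq_univ_iff_forall.2 h)
    exact ⟨⟨x, hx⟩⟩
  have hu1 : ¬ IsUnit M'.toBlocks₁₁.det :=
    L2 _ (fun a b => by
      simp only [Matrix.toBlocks₁₁, hM', Matrix.submatrix_apply, hMdef, Matrix.of_apply]
      split <;> [right; left] <;> [exact ⟨_, rfl⟩; rfl])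
  have hu2 : ¬ IsUnit M'.toBlocks₂₂.det :=
    L2 _ (fun a b => by
      simp only [Matrix.toBlocks₂₂, hM', Matrix.submatrix_apply, hMdef, Matrix.of_apply]
      split <;> [right; left] <;> [exact ⟨_, rfl⟩; rfl])
  -- put it together
  have hsign : M.det = (Equiv.Perm.sign σ : ℤ) * (M'.toBlocks₁₁.det * M'.toBlocks₂₂.det) := by
    rw [← hfactor, hdet']
    rcases Int.units_eq_one_or (Equiv.Perm.sign σ) with h | h <;> rw [h] <;> push_cast <;> ring
  rcases Int.units_eq_one_or (Equiv.Perm.sign σ) with h | h <;> rw [h] at hsign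
  · push_cast at hsign
    rw [one_mul] at hsign
    rcases hirr.isUnit_or_isUnit hsign with h' | h'
    exacts [hu1 h', hu2 h']
  · push_cast at hsign
    rw [neg_one_mul, neg_mul_eq_neg_mul] at hsign
    rcases hirr.isUnit_or_isUnit hsign with h' | h'
    exacts [hu1 ((IsUnit.neg_iff _).mp h'), hu2 h']

lemma crux {α V F : Type*} [Fintype α] [DecidableEq α] [Field F]
    (P : α → α → Prop) [∀ a b, Decidable (P a b)] (g : α → α → V)
    (hirr : Irreducible ((Matrix.of fun a b =>
      if P a b then (MvPolynomial.X (g a b) : MvPolynomial V F) else 0).det))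
    (a₀ b₀ : α) :
    ∃ τ : Equiv.Perm α, τ a₀ = b₀ ∧ ∀ a, a ≠ a₀ → P a (τ a) := by
  obtain ⟨π, hπ⟩ := L1 P g hirr.ne_zero
  classical
  set t : {a : α // a ≠ a₀} → Finset α :=
    fun a => (Finset.univ.filter (fun b => P ↑a b)).erase b₀ with ht
  by_cases hall : ∀ s : Finset {a : α // a ≠ a₀}, s.card ≤ (s.biUnion t).card
  · obtain ⟨f, hfinj, hf⟩ := (Finset.all_card_le_biUnion_card_iff_exists_injective t).1 hall
    have hf' : ∀ a : {a : α // a ≠ a₀}, f a ≠ b₀ ∧ P ↑a (f a) := by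
      intro a
      have := hf a
      rw [ht, Finset.mem_erase, Finset.mem_filter] at this
      exact ⟨this.1, this.2.2⟩
    set g' : α → α := fun a => if h : a = a₀ then b₀ else f ⟨a, h⟩ with hg'
    have hga0 : g' a₀ = b₀ := dif_pos rfl
    have hga : ∀ (a : α) (h : a ≠ a₀), g' a = f ⟨a, h⟩ := fun a h => dif_neg h
    have hginj : Function.Injective g' := by
      intro x y hxy
      by_cases hx : x = a₀ <;> by_cases hy : y = a₀
      · rw [hx, hy]
      · subst hx
        rw [hga0, hga y hy] at hxy
        exact absurd hxy.symm (hf' ⟨y, hy⟩).1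
      · subst hy
        rw [hga0, hga x hx] at hxy
        exact absurd hxy (hf' ⟨x, hx⟩).1
      · rw [hga x hx, hga y hy] at hxy
        exact congrArg Subtype.val (hfinj hxy)
    refine ⟨Equiv.ofBijective g' (Finite.injective_iff_bijective.mp hginj), ?_, ?_⟩
    · exact hga0
    · intro a ha
      show P a (g' a)
      rw [hga a ha]
      exact (hf' ⟨a, ha⟩).2
  · exfalso
    push_neg at hall
    obtain ⟨s, hs⟩ := hall
    set A : Finset α := s.image Subtype.val with hA
    have cardA : A.card = s.card := Finset.card_image_of_injective s Subtype.val_injective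
    set Bn : Finset α := A.biUnion (fun a => Finset.univ.filter (fun b => P a b)) with hBn
    have hPB : ∀ a ∈ A, ∀ b, P a b → b ∈ Bn := by
      intro a ha b hb
      exact Finset.mem_biUnion.2 ⟨a, ha, Finset.mem_filter.2 ⟨Finset.mem_univ _, hb⟩⟩
    have hsubset : Bn ⊆ insert b₀ (s.biUnion t) := by
      intro b hb
      obtain ⟨a, ha, hbf⟩ := Finset.mem_biUnion.1 hb
      obtain ⟨x, hx, rfl⟩ := Finset.mem_image.1 ha
      by_cases hbb : b = b₀
      · exact Finset.mem_insert.2 (Or.inl hbb)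
      · refine Finset.mem_insert.2 (Or.inr (Finset.mem_biUnion.2 ⟨x, hx, ?_⟩))
        rw [ht]
        exact Finset.mem_erase.2 ⟨hbb, hbf⟩
    have hBle : Bn.card ≤ A.card := by
      calc Bn.card ≤ (insert b₀ (s.biUnion t)).card := Finset.card_le_card hsubset
        _ ≤ (s.biUnion t).card + 1 := Finset.card_insert_le _ _
        _ ≤ s.card := hs
        _ = A.card := cardA.symm
    have hAle : A.card ≤ Bn.card := by
      apply Finset.card_le_card_of_injOn π
      · intro a ha
        exact hPB a ha _ (hπ a)
      · exact fun x _ y _ h => π.injective h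
    have hcard : Bn.card = A.card := le_antisymm hBle hAle
    have hAne : A.Nonempty := by
      have : s.Nonempty := Finset.card_pos.1 (lt_of_le_of_lt (Nat.zero_le _) hs)
      exact this.image _
    have ha₀ : a₀ ∉ A := by
      intro h
      obtain ⟨x, _, hx⟩ := Finset.mem_image.1 h
      exact x.2 hx
    have hAu : A ≠ Finset.univ := fun h => ha₀ (h ▸ Finset.mem_univ a₀)
    exact L3 P g A Bn hcard hAne hAu hPB hirr


/-- Existence of an edge section: if the bipartite structure on support `S` is
partitioned into `N` nonempty sections (black rows via `rB`, white columns via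
`rW`) such that every edge belonging to a perfect matching is intra-section and
every section carries an irreducible generic determinant, then some section `c`
connects to the other sections from only one of the two vertex classes. -/
theorem stmt18 (F : Type*) [Field F] (n N : ℕ) (hN : 0 < N)
    (S : Set (Fin n × Fin n)) [DecidablePred (· ∈ S)]
    (rB rW : Fin n → Fin N)
    (hpm : ∃ σ : Equiv.Perm (Fin n), ∀ k, (k, σ k) ∈ S)
    (hintra : ∀ i j : Fin n, (i, j) ∈ S →
      (∃ σ : Equiv.Perm (Fin n), σ i = j ∧ ∀ k, (k, σ k) ∈ S) → rB i = rW j)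
    (hsec : ∀ c : Fin N,
      ∃ e : {i : Fin n // rB i = c} ≃ {j : Fin n // rW j = c},
        Irreducible (Matrix.det (Matrix.of
          fun a b : {i : Fin n // rB i = c} =>
            if ((a : Fin n), ((e b) : Fin n)) ∈ S
            then (MvPolynomial.X ((a : Fin n), ((e b) : Fin n)) :
              MvPolynomial (Fin n × Fin n) F)
            else 0)))
    (hne : ∀ c : Fin N, ∃ i, rB i = c) :
    ∃ c : Fin N,
      (∀ i j : Fin n, (i, j) ∈ S → rB i = c → rW j = c) ∨
      (∀ i j : Fin n, (i, j) ∈ S → rW j = c → rB i = c) := by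
  by_contra hcon
  push_neg at hcon
  have hcross : ∀ c : Fin N, ∃ p : Fin n × Fin n, p ∈ S ∧ rB p.1 = c ∧ rW p.2 ≠ c := by
    intro c
    obtain ⟨h1, _⟩ := hcon c
    obtain ⟨i, j, hij, hbi, hwj⟩ := h1
    exact ⟨(i, j), hij, hbi, hwj⟩
  choose p hpS hIb hJw using hcross
  set I : Fin N → Fin n := fun c => (p c).1 with hI
  set J : Fin N → Fin n := fun c => (p c).2 with hJ
  set f : Fin N → Fin N := fun c => rW (J c) with hf
  have hfne : ∀ c, f c ≠ c := hJw
  -- find a periodic point of f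
  set d0 : Fin N := ⟨0, hN⟩ with hd0
  have hpigeon : ∃ a b : ℕ, a < b ∧ f^[a] d0 = f^[b] d0 := by
    have hni : ¬ Function.Injective (fun t : Fin (N + 1) => f^[(t : ℕ)] d0) := by
      intro hinj
      have h1 := Fintype.card_le_of_injective _ hinj
      simp [Fintype.card_fin] at h1
    rw [Function.not_injective_iff] at hni
    obtain ⟨s, t, hfeq, hne'⟩ := hni
    rcases hne'.lt_or_gt with h | h
    · exact ⟨s, t, h, hfeq⟩
    · exact ⟨t, s, h, hfeq.symm⟩
  obtain ⟨a, b, hab, habe⟩ := hpigeon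
  have hper' : Function.IsPeriodicPt f (b - a) (f^[a] d0) := by
    show f^[b - a] (f^[a] d0) = f^[a] d0
    rw [← Function.iterate_add_apply, Nat.sub_add_cancel hab.le, habe]
  set d : Fin N := f^[a] d0 with hd
  have hdmem : d ∈ Function.periodicPts f :=
    Function.mk_mem_periodicPts (by omega) hper'
  set m : ℕ := Function.minimalPeriod f d with hm
  have hm0 : 0 < m := Function.minimalPeriod_pos_of_mem_periodicPts hdmem
  haveI : NeZero m := ⟨hm0.ne'⟩
  have hper : f^[m] d = d := Function.iterate_minimalPeriod
  set cyc : ZMod m → Fin N := fun t => f^[t.val] d with hcyc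
  have hmod : ∀ a : ℕ, f^[a % m] d = f^[a] d := by
    intro a
    conv_rhs => rw [← Nat.mod_add_div a m]
    rw [Function.iterate_add_apply, Function.iterate_mul, Function.iterate_fixed hper]
  have hcast : ∀ a : ℕ, cyc (a : ZMod m) = f^[a] d := by
    intro a
    show f^[((a : ZMod m)).val] d = _
    rw [ZMod.val_natCast]
    exact hmod a
  have hstep : ∀ t : ZMod m, cyc (t + 1) = f (cyc t) := by
    intro t
    have h1 : ((t.val + 1 : ℕ) : ZMod m) = t + 1 := by
      push_cast
      rw [ZMod.natCast_rightInverse t]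
    rw [← h1, hcast, Function.iterate_succ_apply']
  have hcycinj : Function.Injective cyc := by
    intro s t h
    have h2 := Function.iterate_injOn_Iio_minimalPeriod (f := f) (x := d)
      (Set.mem_Iio.2 (ZMod.val_lt s)) (Set.mem_Iio.2 (ZMod.val_lt t)) h
    rw [← ZMod.natCast_rightInverse s, ← ZMod.natCast_rightInverse t]
    exact congrArg _ h2
  -- section equivalences
  set e : ∀ c : Fin N, {i : Fin n // rB i = c} ≃ {j : Fin n // rW j = c} :=
    fun c => (hsec c).choose with he
  have hirr : ∀ c, Irreducible (Matrix.det (Matrix.of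
      fun a b : {i : Fin n // rB i = c} =>
        if ((a : Fin n), ((e c b : Fin n))) ∈ S
        then (MvPolynomial.X ((a : Fin n), ((e c b : Fin n))) : MvPolynomial (Fin n × Fin n) F)
        else 0)) := fun c => (hsec c).choose_spec
  -- the white cycle vertices
  set w : ZMod m → Fin n := fun t => J (cyc (t - 1)) with hw
  have hwW : ∀ t, rW (w t) = cyc t := by
    intro t
    have h1 : f (cyc (t - 1)) = cyc t := by rw [← hstep (t - 1), sub_add_cancel]
    exact h1
  have hwinj : Function.Injective w := fun s t h =>
    hcycinj (by rw [← hwW s, ← hwW t, h])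
  -- section bijections with prescribed exceptional values
  have key : ∀ c : Fin N, ∃ φ : {i : Fin n // rB i = c} ≃ {j : Fin n // rW j = c},
      (∀ a : {i : Fin n // rB i = c},
        ((¬ ∃ t : ZMod m, cyc t = c) ∨ (a : Fin n) ≠ I c) →
        ((a : Fin n), ((φ a : Fin n))) ∈ S) ∧
      (∀ t : ZMod m, cyc t = c → ∀ a : {i : Fin n // rB i = c},
        (a : Fin n) = I c → ((φ a : Fin n)) = w t) := by
    intro c
    by_cases h : ∃ t : ZMod m, cyc t = c
    · obtain ⟨t, ht⟩ := h
      have hwc : rW (w t) = c := by rw [hwW t, ht]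
      obtain ⟨τ, hτ0, hτ⟩ := crux
        (fun a b : {i : Fin n // rB i = c} => ((a : Fin n), ((e c b : Fin n))) ∈ S)
        (fun a b => ((a : Fin n), ((e c b : Fin n)))) (hirr c)
        ⟨I c, hIb c⟩ ((e c).symm ⟨w t, hwc⟩)
      refine ⟨τ.trans (e c), ?_, ?_⟩
      · intro a ha
        have ha' : a ≠ ⟨I c, hIb c⟩ := by
          rcases ha with ha | ha
          · exact absurd ⟨t, ht⟩ ha
          · exact fun hh => ha (by rw [hh])
        exact hτ a ha'
      · intro t' ht' a haI
        have htt : t' = t := hcycinj (ht'.trans ht.symm)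
        have ha : a = ⟨I c, hIb c⟩ := Subtype.ext haI
        subst htt
        rw [ha]
        show ((e c) (τ ⟨I c, hIb c⟩) : Fin n) = w t'
        rw [hτ0, Equiv.apply_symm_apply]
    · obtain ⟨π, hπ⟩ := L1
        (fun a b : {i : Fin n // rB i = c} => ((a : Fin n), ((e c b : Fin n))) ∈ S)
        (fun a b => ((a : Fin n), ((e c b : Fin n)))) (hirr c).ne_zero
      exact ⟨π.trans (e c), fun a _ => hπ a, fun t ht => absurd ⟨t, ht⟩ h⟩
  choose Φ hΦS hΦw using key
  -- the global permutation
  set ψ : Fin n ≃ Fin n := Equiv.ofFiberEquiv (f := rB) (g := rW) Φ with hψdef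
  have hψ : ∀ x, ψ x = ↑(Φ (rB x) ⟨x, rfl⟩) := fun x => rfl
  have hψW : ∀ x, rW (ψ x) = rB x := fun x => Equiv.ofFiberEquiv_map Φ x
  set wEmb : ZMod m ↪ Fin n := ⟨w, hwinj⟩ with hwEmb
  set ρ : Equiv.Perm (Fin n) := (Equiv.addRight (1 : ZMod m)).viaFintypeEmbedding wEmb with hρ
  have hρw : ∀ t, ρ (w t) = w (t + 1) := fun t =>
    Equiv.Perm.viaFintypeEmbedding_apply_image (Equiv.addRight 1) wEmb t
  have hρfix : ∀ y, y ∉ Set.range w → ρ y = y := fun y hy =>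
    Equiv.Perm.viaFintypeEmbedding_apply_notMem_range _ _ (by exact hy)
  set σ : Equiv.Perm (Fin n) := ψ.trans ρ with hσdef
  have hσ : ∀ k, σ k = ρ (ψ k) := fun k => rfl
  -- all σ-edges lie in S
  have hσS : ∀ k, (k, σ k) ∈ S := by
    intro k
    by_cases hk : (∃ t : ZMod m, cyc t = rB k) ∧ k = I (rB k)
    · obtain ⟨⟨t, ht⟩, hkI⟩ := hk
      have h1 : ψ k = w t := by
        rw [hψ k]
        exact hΦw (rB k) t ht ⟨k, rfl⟩ hkI
      have h2 : σ k = w (t + 1) := by rw [hσ, h1, hρw]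
      have h3 : w (t + 1) = J (rB k) := by
        show J (cyc (t + 1 - 1)) = J (rB k)
        rw [add_sub_cancel_right, ht]
      have h4 : (I (rB k), J (rB k)) ∈ S := hpS (rB k)
      rw [← hkI] at h4
      rw [h2, h3]
      exact h4
    · have hcond : (¬ ∃ t : ZMod m, cyc t = rB k) ∨ k ≠ I (rB k) := not_and_or.mp hk
      have hS1 : (k, ψ k) ∈ S := by
        rw [hψ k]
        exact hΦS (rB k) ⟨k, rfl⟩ hcond
      have hnr : ψ k ∉ Set.range w := by
        rintro ⟨s, hs⟩
        have hcs : cyc s = rB k := by rw [← hwW s, hs, hψW k]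
        have hkI : k ≠ I (rB k) := hcond.elim (fun h' => absurd ⟨s, hcs⟩ h') id
        have h2 : ((Φ (rB k)) ⟨I (rB k), hIb (rB k)⟩ : Fin n) = w s :=
          hΦw (rB k) s hcs ⟨I (rB k), hIb (rB k)⟩ rfl
        have h3 : (Φ (rB k)) ⟨k, rfl⟩ = (Φ (rB k)) ⟨I (rB k), hIb (rB k)⟩ :=
          Subtype.ext (by rw [← hψ k, h2]; exact hs.symm)
        have h4 := (Φ (rB k)).injective h3
        exact hkI (congrArg Subtype.val h4)
      have h5 : σ k = ψ k := by rw [hσ]; exact hρfix _ hnr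
      rw [h5]
      exact hS1
  -- apply hintra to the chosen cross edge in cyc 0
  have hA : cyc (0 : ZMod m) = rB (I (cyc 0)) := (hIb _).symm
  have e1 : ψ (I (cyc 0)) = w 0 := by
    rw [hψ]
    exact hΦw (rB (I (cyc 0))) 0 hA ⟨_, rfl⟩ (congrArg I (hIb (cyc 0))).symm
  have e2 : σ (I (cyc 0)) = w (0 + 1) := by rw [hσ, e1, hρw]
  have e3 : w ((0 : ZMod m) + 1) = J (cyc 0) := by
    show J (cyc (0 + 1 - 1)) = J (cyc 0)
    rw [add_sub_cancel_right]
  have hfin := hintra (I (cyc 0)) (J (cyc 0)) (hpS (cyc 0)) ⟨σ, by rw [e2, e3], hσS⟩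
  exact hfne (cyc 0) (by rw [hf]; show rW (J (cyc 0)) = cyc 0; rw [← hfin, hIb])
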